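/- Let V₀ > 0 and 0 < α < 1/3, and on t < 0 set V(φ) = -V₀·e^{-√(2/α)·φ}, φ(t) = √(2α)·ln(-√(V₀/(α(1-3α)))·t), ρ(t) = (1/2)φ'(t)² + V(φ(t)) and P(t) = (1/2)φ'(t)² - V(φ(t)). Then for every t < 0 one has ρ(t) ≠ 0 and P(t)/ρ(t) = -1 + 2/(3α), and this equation-of-state parameter is strictly greater than 1. -/

import Mathlib

/-- On the ekpyrotic attractor `φ(t) = √(2α)·log(-√(V₀/(α(1-3α)))·t)` of the
negative exponential potential `V(φ) = -V₀·exp(-√(2/α)·φ)` (`V₀ > 0`,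
`0 < α < 1/3`), the energy density `ρ = (1/2)φ'² + V(φ)` is nonzero on `t < 0`,
the equation-of-state parameter `P/ρ` equals `-1 + 2/(3α)`, and this value is
strictly greater than `1` (super-stiff fluid). -/
theorem ekpyrotic_attractor_equation_of_state
    (V₀ α : ℝ) (hV₀ : 0 < V₀) (hα : 0 < α) (hα' : α < 1/3) :
    let V : ℝ → ℝ := fun x => -V₀ * Real.exp (-(Real.sqrt (2/α)) * x)
    let φ : ℝ → ℝ := fun t =>
      Real.sqrt (2*α) * Real.log (-(Real.sqrt (V₀ / (α * (1 - 3*α)))) * t)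
    let ρ : ℝ → ℝ := fun t => (1/2) * (deriv φ t)^2 + V (φ t)
    let P : ℝ → ℝ := fun t => (1/2) * (deriv φ t)^2 - V (φ t)
    (∀ t : ℝ, t < 0 → ρ t ≠ 0 ∧ P t / ρ t = -1 + 2/(3*α)) ∧
      1 < -1 + 2/(3*α) := by
  intro V φ ρ P
  have h13 : 0 < 1 - 3*α := by linarith
  have hαne : α ≠ 0 := ne_of_gt hα
  constructor
  · intro t ht
    have htne : t ≠ 0 := ne_of_lt ht
    set s : ℝ := Real.sqrt (V₀ / (α * (1 - 3*α))) with hs_def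
    have hs : 0 < s := Real.sqrt_pos.mpr (by positivity)
    have hs2 : s ^ 2 = V₀ / (α * (1 - 3*α)) := Real.sq_sqrt (by positivity)
    have hct : 0 < -s * t := by nlinarith
    -- derivative of φ
    have h1 : HasDerivAt (fun t : ℝ => -s * t) (-s) t := by
      simpa using (hasDerivAt_id t).const_mul (-s)
    have h2 : HasDerivAt (fun t : ℝ => Real.log (-s * t)) ((-s * t)⁻¹ * (-s)) t :=
      (Real.hasDerivAt_log (ne_of_gt hct)).comp t h1
    have hφ : HasDerivAt φ (Real.sqrt (2*α) * ((-s * t)⁻¹ * (-s))) t :=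
      h2.const_mul _
    have hderiv : deriv φ t = Real.sqrt (2*α) / t := by
      rw [hφ.deriv]
      field_simp
    have h2α : Real.sqrt (2*α) ^ 2 = 2*α := Real.sq_sqrt (by positivity)
    -- value of V (φ t)
    have hsq : Real.sqrt (2/α) * Real.sqrt (2*α) = 2 := by
      rw [← Real.sqrt_mul (by positivity)]
      have h4 : 2/α * (2*α) = 4 := by field_simp; ring
      rw [h4, show (4:ℝ) = 2^2 by norm_num, Real.sqrt_sq (by norm_num)]
    have hV : V (φ t) = -(α * (1 - 3*α)) / t^2 := by
      show -V₀ * Real.exp (-(Real.sqrt (2/α)) * (Real.sqrt (2*α) * Real.log (-s*t)))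
          = -(α * (1 - 3*α)) / t^2
      have harg : -(Real.sqrt (2/α)) * (Real.sqrt (2*α) * Real.log (-s*t))
          = -(2 * Real.log (-s*t)) := by
        rw [← mul_assoc]
        rw [show -(Real.sqrt (2/α)) * Real.sqrt (2*α)
            = -(Real.sqrt (2/α) * Real.sqrt (2*α)) by ring, hsq]
        ring
      rw [harg]
      have hexp : Real.exp (-(2 * Real.log (-s*t))) = ((-s*t)^2)⁻¹ := by
        rw [Real.exp_neg, two_mul, Real.exp_add, Real.exp_log hct, sq]
      rw [hexp]
      have hst2 : (-s*t)^2 = s^2 * t^2 := by ring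
      rw [hst2, hs2]
      field_simp
    have hρ : ρ t = 3*α^2 / t^2 := by
      show (1/2) * (deriv φ t)^2 + V (φ t) = 3*α^2 / t^2
      rw [hderiv, hV, div_pow, h2α]
      field_simp
      ring
    have hP : P t = α*(2 - 3*α) / t^2 := by
      show (1/2) * (deriv φ t)^2 - V (φ t) = α*(2 - 3*α) / t^2
      rw [hderiv, hV, div_pow, h2α]
      field_simp
      ring
    have hρne : ρ t ≠ 0 := by
      rw [hρ]; positivity
    refine ⟨hρne, ?_⟩
    rw [hρ, hP]
    field_simp
    ring
  · have h2 : (2:ℝ) < 2/(3*α) := by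
      rw [lt_div_iff₀ (by linarith)]
      nlinarith
    linarith
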